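/- In the monoid G⁺_{B_ii} = ⟨ a, b, c | cbb = bba, ab = bc, ac = ca ⟩_mo, any element w containing the letter b at least 4 times is divisible by Δ₀ = bbb both from the left and from the right. -/

import Mathlib

/-- The three generators of the monoid of type B_ii. -/
inductive BGen : Type
  | a : BGen
  | b : BGen
  | c : BGen
deriving DecidableEq

/-- The defining relations cbb = bba, ab = bc, ac = ca. -/
inductive BRel : FreeMonoid BGen → FreeMonoid BGen → Prop
  | cbb : BRel (FreeMonoid.of BGen.c * FreeMonoid.of BGen.b * FreeMonoid.of BGen.b)
               (FreeMonoid.of BGen.b * FreeMonoid.of BGen.b * FreeMonoid.of BGen.a)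
  | ab : BRel (FreeMonoid.of BGen.a * FreeMonoid.of BGen.b)
              (FreeMonoid.of BGen.b * FreeMonoid.of BGen.c)
  | ac : BRel (FreeMonoid.of BGen.a * FreeMonoid.of BGen.c)
              (FreeMonoid.of BGen.c * FreeMonoid.of BGen.a)

/-- The monoid G⁺_{B_ii} = ⟨ a, b, c ∣ cbb = bba, ab = bc, ac = ca ⟩_mo. -/
abbrev BMonoid : Type := (conGen BRel).Quotient

/-- The images of the generators in the monoid. -/
def bA : BMonoid := (conGen BRel).mk' (FreeMonoid.of BGen.a)
def bB : BMonoid := (conGen BRel).mk' (FreeMonoid.of BGen.b)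
def bC : BMonoid := (conGen BRel).mk' (FreeMonoid.of BGen.c)

namespace BHelp

def mk : FreeMonoid BGen → BMonoid := (conGen BRel).mk'

lemma mk_mul (x y : FreeMonoid BGen) : mk (x * y) = mk x * mk y := map_mul _ _ _

lemma rel {x y : FreeMonoid BGen} (h : BRel x y) : mk x = mk y :=
  (Con.eq _).mpr (ConGen.Rel.of _ _ h)

lemma r1 : bC * bB * bB = bB * bB * bA := by
  have := rel BRel.cbb; simpa [mk, bA, bB, bC, map_mul] using this

lemma r2 : bA * bB = bB * bC := by
  have := rel BRel.ab; simpa [mk, bA, bB, bC, map_mul] using this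

lemma r3 : bA * bC = bC * bA := by
  have := rel BRel.ac; simpa [mk, bA, bB, bC, map_mul] using this

/- parametrized (right-tail) versions -/
lemma p1 (y : BMonoid) : bC * (bB * (bB * y)) = bB * (bB * (bA * y)) := by
  rw [← mul_assoc, ← mul_assoc, r1, mul_assoc, mul_assoc]

lemma p2 (y : BMonoid) : bA * (bB * y) = bB * (bC * y) := by
  rw [← mul_assoc, r2, mul_assoc]

lemma p3 (y : BMonoid) : bA * (bC * y) = bC * (bA * y) := by
  rw [← mul_assoc, r3, mul_assoc]

lemma q1 : bC * (bB * bB) = bB * (bB * bA) := by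
  rw [← mul_assoc, r1, mul_assoc]

/- powers -/
lemma aCpow (i : ℕ) (y : BMonoid) : bA * (bC ^ i * y) = bC ^ i * (bA * y) := by
  induction i generalizing y with
  | zero => simp
  | succ n ih => rw [pow_succ', mul_assoc, p3, ih, ← mul_assoc, ← pow_succ']

lemma bCpow (j : ℕ) (y : BMonoid) : bB * (bC ^ j * y) = bA ^ j * (bB * y) := by
  induction j generalizing y with
  | zero => simp
  | succ n ih => rw [pow_succ, mul_assoc, ih, ← p2, ← mul_assoc, ← pow_succ]

lemma cPowBB (i : ℕ) (y : BMonoid) :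
    bC ^ i * (bB * (bB * y)) = bB * (bB * (bA ^ i * y)) := by
  induction i generalizing y with
  | zero => simp
  | succ n ih =>
    rw [pow_succ', mul_assoc bC (bC ^ n), ih, p1, ← mul_assoc bA, ← pow_succ']

lemma swapAC (i j : ℕ) (y : BMonoid) : bC ^ i * (bA ^ j * y) = bA ^ j * (bC ^ i * y) := by
  induction j generalizing y with
  | zero => simp
  | succ n ih =>
    rw [pow_succ', mul_assoc bA (bA ^ n), ← aCpow, ih, ← mul_assoc bA, ← pow_succ']

/- Δ₀ = b³ is central -/
lemma genB3 (x : BGen) :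
    mk (FreeMonoid.of x) * (bB * bB * bB) = (bB * bB * bB) * mk (FreeMonoid.of x) := by
  cases x with
  | a =>
    show bA * (bB * bB * bB) = (bB * bB * bB) * bA
    rw [mul_assoc bB bB bB, p2, q1]
    simp [mul_assoc]
  | b => show bB * (bB * bB * bB) = (bB * bB * bB) * bB; simp [mul_assoc]
  | c =>
    show bC * (bB * bB * bB) = (bB * bB * bB) * bC
    rw [mul_assoc bB bB bB, p1, r2]
    simp [mul_assoc]

lemma central (g : BMonoid) : bB * bB * bB * g = g * (bB * bB * bB) := by
  induction g using Con.induction_on with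
  | H x =>
    change bB * bB * bB * mk x = mk x * (bB * bB * bB)
    induction x using FreeMonoid.recOn with
    | one =>
      have : mk 1 = 1 := map_one _
      rw [this, one_mul, mul_one]
    | of_mul g xs ih =>
      rw [mk_mul, ← mul_assoc (bB*bB*bB), ← genB3 g, mul_assoc, ih, ← mul_assoc, ← mul_assoc]

lemma centralPow (g : BMonoid) (y : BMonoid) :
    g * (bB * bB * bB * y) = bB * bB * bB * (g * y) := by
  rw [← mul_assoc, ← central, mul_assoc]

/- extraction of the first b -/
lemma extract1 : ∀ l : List BGen, 1 ≤ l.count BGen.b →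
    ∃ (i : ℕ) (u : List BGen),
      mk (FreeMonoid.ofList l) = bC ^ i * (bB * mk (FreeMonoid.ofList u)) ∧
      u.count BGen.b + 1 = l.count BGen.b := by
  intro l
  induction l with
  | nil => intro h; simp at h
  | cons x l ih =>
    intro h
    cases x with
    | b =>
      refine ⟨0, l, ?_, ?_⟩
      · rw [FreeMonoid.ofList_cons, mk_mul, pow_zero, one_mul]; rfl
      · simp [List.count_cons]
    | a =>
      have h' : 1 ≤ l.count BGen.b := by simpa [List.count_cons] using h
      obtain ⟨i, u, hu, hc⟩ := ih h'
      refine ⟨i, BGen.c :: u, ?_, ?_⟩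
      · rw [FreeMonoid.ofList_cons, mk_mul]
        show bA * mk (FreeMonoid.ofList l) = _
        rw [hu, aCpow, p2, FreeMonoid.ofList_cons, mk_mul]; rfl
      · simpa [List.count_cons] using hc
    | c =>
      have h' : 1 ≤ l.count BGen.b := by simpa [List.count_cons] using h
      obtain ⟨i, u, hu, hc⟩ := ih h'
      refine ⟨i + 1, u, ?_, ?_⟩
      · rw [FreeMonoid.ofList_cons, mk_mul]
        show bC * mk (FreeMonoid.ofList l) = _
        rw [hu, ← mul_assoc, ← pow_succ']
      · simpa [List.count_cons] using hc

lemma mk_replicate_a (i : ℕ) : mk (FreeMonoid.ofList (List.replicate i BGen.a)) = bA ^ i := by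
  induction i with
  | zero => exact map_one _
  | succ n ih =>
    rw [List.replicate_succ, FreeMonoid.ofList_cons, mk_mul, ih, pow_succ']; rfl

/- extraction of the first two b's -/
lemma extract2 : ∀ l : List BGen, 2 ≤ l.count BGen.b →
    ∃ (s : ℕ) (u : List BGen),
      mk (FreeMonoid.ofList l) = bA ^ s * (bB * (bB * mk (FreeMonoid.ofList u))) ∧
      u.count BGen.b + 2 = l.count BGen.b := by
  intro l hl
  obtain ⟨i, u, hu, hcu⟩ := extract1 l (le_trans (by norm_num) hl)
  have hu1 : 1 ≤ u.count BGen.b := by omega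
  obtain ⟨j, v, hv, hcv⟩ := extract1 u hu1
  refine ⟨j, List.replicate i BGen.a ++ v, ?_, ?_⟩
  · rw [hu, hv, bCpow, swapAC, cPowBB, FreeMonoid.ofList_append, mk_mul, mk_replicate_a]
  · simp [List.count_append, List.count_replicate]
    omega

end BHelp

open BHelp in
/-- Any element of G⁺_{B_ii} containing the letter b at least 4 times is divisible by
Δ₀ = bbb from the left and from the right. -/
theorem stmt_16 (w : FreeMonoid BGen)
    (hb : 4 ≤ (FreeMonoid.toList w).count BGen.b) :
    (∃ z : BMonoid, (conGen BRel).mk' w = (bB * bB * bB) * z) ∧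
    (∃ z : BMonoid, (conGen BRel).mk' w = z * (bB * bB * bB)) := by
  have hw : (conGen BRel).mk' w = mk (FreeMonoid.ofList (FreeMonoid.toList w)) := rfl
  obtain ⟨s, u, hu, hcu⟩ := extract2 (FreeMonoid.toList w) (le_trans (by norm_num) hb)
  have hu2 : 2 ≤ u.count BGen.b := by omega
  obtain ⟨t, v, hv, hcv⟩ := extract2 u hu2
  have key : (conGen BRel).mk' w =
      (bB * bB * bB) * (bA ^ s * (bC ^ t * (bB * mk (FreeMonoid.ofList v)))) := by
    rw [hw, hu, hv]
    rw [show bB * (bB * (bA ^ t * (bB * (bB * mk (FreeMonoid.ofList v))))) =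
        bC ^ t * (bB * (bB * (bB * (bB * mk (FreeMonoid.ofList v))))) from
      (cPowBB t (bB * (bB * mk (FreeMonoid.ofList v)))).symm]
    have h1 : bB * (bB * (bB * (bB * mk (FreeMonoid.ofList v)))) =
        bB * bB * bB * (bB * mk (FreeMonoid.ofList v)) := by simp [mul_assoc]
    rw [h1, centralPow, centralPow]
  exact ⟨⟨_, key⟩, ⟨_, by rw [key, central]⟩⟩
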